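/- Let W be an ultrafilter on ℕ × J with π₂(W) countably incomplete. Then W is a tensor product if and only if for every f : J → ℕ such that the image ultrafilter f(π₂(W)) on ℕ is non-principal, the set Γ(f) = {(n,j) ∈ ℕ × J : n < f(j)} belongs to W. -/
import Mathlib


/-- Tensor product of ultrafilters: `X ∈ tensor U V ↔ {i | {j | (i,j) ∈ X} ∈ V} ∈ U`. -/
def tensor {I J : Type*} (U : Ultrafilter I) (V : Ultrafilter J) : Ultrafilter (I × J) :=
  U.bind fun i => V.map fun j => (i, j)

theorem mem_tensor {I J : Type*} {U : Ultrafilter I} {V : Ultrafilter J} {X : Set (I × J)} :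
    X ∈ tensor U V ↔ {i : I | {j : J | (i, j) ∈ X} ∈ V} ∈ U := Iff.rfl

lemma snd_tensor {I J : Type*} (U : Ultrafilter I) (V : Ultrafilter J) :
    Ultrafilter.map Prod.snd (tensor U V) = V := by
  ext s
  rw [Ultrafilter.mem_map, mem_tensor]
  by_cases hs : s ∈ V
  · have : {i : I | {j : J | (i, j) ∈ Prod.snd ⁻¹' s} ∈ V} = Set.univ := by
      ext i; simp [Set.preimage, hs]
    simp [this, hs]; exact Filter.univ_mem
  · have : {i : I | {j : J | (i, j) ∈ Prod.snd ⁻¹' s} ∈ V} = ∅ := by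
      ext i; simp [Set.preimage, hs]
    simp [this, hs]

theorem stmt_10 {J : Type*} (W : Ultrafilter (ℕ × J))
    (hci : ∃ A : ℕ → Set J, (∀ n, A n ∈ Ultrafilter.map Prod.snd W) ∧
      (⋂ n, A n) ∉ Ultrafilter.map Prod.snd W) :
    (∃ (U : Ultrafilter ℕ) (V : Ultrafilter J), W = tensor U V) ↔
      ∀ f : J → ℕ,
        (∀ n : ℕ, Ultrafilter.map f (Ultrafilter.map Prod.snd W) ≠ pure n) →
          {p : ℕ × J | p.1 < f p.2} ∈ W := by
  classical
  constructor
  · rintro ⟨U, V₀, rfl⟩ f hf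
    rw [mem_tensor]
    have h : ∀ n : ℕ, {j | n < f j} ∈ V₀ := by
      intro n
      by_contra hn
      have hc : {j | n < f j}ᶜ ∈ V₀ := Ultrafilter.compl_mem_iff_notMem.mpr hn
      have h1 : f ⁻¹' (Set.Iic n) ∈ V₀ := by
        convert hc using 1
        ext j; simp only [Set.mem_preimage, Set.mem_Iic, Set.mem_compl_iff, Set.mem_setOf_eq]; omega
      have h2 : Set.Iic n ∈ Ultrafilter.map f (Ultrafilter.map Prod.snd (tensor U V₀)) := by
        rw [snd_tensor, Ultrafilter.mem_map]; exact h1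
      obtain ⟨a, _, hpa⟩ := Ultrafilter.eq_pure_of_finite_mem (Set.finite_Iic n) h2
      exact hf a hpa
    exact Filter.univ_mem' fun i => h i
  · intro hΓ
    obtain ⟨A, hA, hAni⟩ := hci
    set V := Ultrafilter.map Prod.snd W with hV
    set U := Ultrafilter.map Prod.fst W with hU
    refine ⟨U, V, ?_⟩
    have key : ∀ Y : Set (ℕ × J), Y ∈ tensor U V → Y ∈ W := by
      intro Y hY
      rw [mem_tensor] at hY
      set S : Set ℕ := {i | {j | (i, j) ∈ Y} ∈ V} with hS
      set D : ℕ → Set J := fun k =>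
        ((⋂ m ∈ Finset.range (k + 1), A m) ∩ (⋂ m, A m)ᶜ) ∩
          (if k ∈ S then {j | (k, j) ∈ Y} else Set.univ) with hD
      have hDV : ∀ k, D k ∈ V := by
        intro k
        refine Filter.inter_mem (Filter.inter_mem ?_ ?_) ?_
        · exact (Filter.biInter_finset_mem _).mpr fun m _ => hA m
        · exact Ultrafilter.compl_mem_iff_notMem.mpr hAni
        · split_ifs with hk
          · exact hk
          · exact Filter.univ_mem
      set C : ℕ → Set J := fun n => ⋂ k ∈ Finset.range (n + 1), D k with hC
      have hCV : ∀ n, C n ∈ V := fun n => (Filter.biInter_finset_mem _).mpr fun k _ => hDV k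
      have hCD : ∀ n, C n ⊆ D n := by
        intro n j hj
        simp only [hC, Set.mem_iInter] at hj
        exact hj n (Finset.mem_range.mpr (Nat.lt_succ_self n))
      have hCanti : ∀ m n, m ≤ n → C n ⊆ C m := by
        intro m n hmn j hj
        simp only [hC, Set.mem_iInter] at hj ⊢
        intro k hk
        exact hj k (Finset.mem_range.mpr (lt_of_lt_of_le (Finset.mem_range.mp hk) (by omega)))
      have hex : ∀ j, ∃ n, j ∉ C n := by
        intro j
        by_contra h
        push_neg at h
        have hAj : ∀ n, j ∈ A n := by
          intro n
          have := (hCD n (h n)).1.1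
          simp only [Set.mem_iInter] at this
          exact this n (Finset.mem_range.mpr (Nat.lt_succ_self n))
        exact (hCD 0 (h 0)).1.2 (Set.mem_iInter.mpr hAj)
      set f : J → ℕ := fun j => Nat.find (hex j) with hfdef
      have hfC : ∀ n j, n < f j ↔ j ∈ C n := by
        intro n j
        rw [hfdef, Nat.lt_find_iff]
        constructor
        · intro h; exact not_not.mp (h n le_rfl)
        · intro hj m hm hnot; exact hnot (hCanti m n hm hj)
      have hfne : ∀ n : ℕ, Ultrafilter.map f (Ultrafilter.map Prod.snd W) ≠ pure n := by
        intro n hn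
        have h1 : f ⁻¹' {n} ∈ V := by
          rw [hV, ← Ultrafilter.mem_map, hn]; rfl
        obtain ⟨j, hj1, hj2⟩ := Filter.nonempty_of_mem (Filter.inter_mem h1 (hCV n))
        have : n < f j := (hfC n j).mpr hj2
        simp only [Set.mem_preimage, Set.mem_singleton_iff] at hj1
        omega
      have hΓf : {p : ℕ × J | p.1 < f p.2} ∈ W := hΓ f hfne
      have hSW : Prod.fst ⁻¹' S ∈ W := hY
      filter_upwards [hΓf, hSW] with p hp hpS
      have hjC : p.2 ∈ C p.1 := (hfC p.1 p.2).mp hp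
      have := (hCD p.1 hjC).2
      rw [if_pos (show p.1 ∈ S from hpS)] at this
      simpa using this
    exact Ultrafilter.coe_le_coe.mp fun Y hY => key Y hY
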